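/- Let ψ = Σ_{i=0}^{2ⁿ−1} r_i |i⟩ with all r_i real and nonnegative (all phases zero), and let ψ' = Σ_{i} r_i e^{iφ'_i} |i⟩ be any pure state with the same computational-basis probabilities. If ψ' also produces the same outcome probabilities as ψ when measured in the basis {H^{⊗n}|i⟩}, then e^{iφ'_s} = e^{iφ'_l} whenever r_s r_l ≠ 0; in particular ψ' equals ψ up to a global phase. -/

import Mathlib

open BigOperators

/-- Entrywise form of the n-fold tensor power of the Hadamard matrix. -/
noncomputable def Hpow (n : ℕ) : Matrix (Fin (2 ^ n)) (Fin (2 ^ n)) ℂ := fun j k =>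
  ∏ m ∈ Finset.range n,
    ((1 / Real.sqrt 2 : ℝ) : ℂ) * (if (j : ℕ).testBit m ∧ (k : ℕ).testBit m then -1 else 1)

/-- If ψ = Σ r_i|i⟩ has all nonnegative real amplitudes and ψ' = Σ r_i e^{iφ'_i}|i⟩ has the
same computational-basis probabilities and the same outcome probabilities in the basis
{H^{⊗n}|i⟩}, then e^{iφ'_s} = e^{iφ'_l} whenever r_s r_l ≠ 0; in particular ψ' equals ψ up to
a global phase. -/
theorem stmt_6 (n : ℕ) (hn : 1 ≤ n) (r : Fin (2 ^ n) → ℝ) (φ' : Fin (2 ^ n) → ℝ)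
    (hr : ∀ i, 0 ≤ r i) (hnorm : ∑ i, r i ^ 2 = 1)
    (hmeas : ∀ j : Fin (2 ^ n),
      ‖(∑ k, (starRingEnd ℂ) (Hpow n k j) *
          ((r k : ℂ) * Complex.exp (Complex.I * (φ' k : ℂ))))‖ =
      ‖(∑ k, (starRingEnd ℂ) (Hpow n k j) * (r k : ℂ))‖) :
    (∀ s l, r s * r l ≠ 0 →
        Complex.exp (Complex.I * (φ' s : ℂ)) = Complex.exp (Complex.I * (φ' l : ℂ))) ∧
    ∃ c : ℂ, ‖c‖ = 1 ∧
      ∀ i, (r i : ℂ) * Complex.exp (Complex.I * (φ' i : ℂ)) = c * (r i : ℂ) := by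
  classical
  set z : Fin (2 ^ n) → ℂ := fun k => (r k : ℂ) * Complex.exp (Complex.I * (φ' k : ℂ)) with hz
  have hNpos : 0 < 2 ^ n := pow_pos (by norm_num) n
  have j0 : Fin (2 ^ n) := ⟨0, hNpos⟩
  -- Hpow at column 0 is a positive real constant
  have hH : ∀ k : Fin (2 ^ n), Hpow n k ⟨0, hNpos⟩ = (((1 / Real.sqrt 2 : ℝ) : ℂ)) ^ n := by
    intro k
    unfold Hpow
    simp [Nat.zero_testBit]
  have hs2 : (0:ℝ) < Real.sqrt 2 := Real.sqrt_pos.mpr (by norm_num)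
  have ha : (0:ℝ) < (1 / Real.sqrt 2) ^ n := pow_pos (by positivity) n
  have key := hmeas ⟨0, hNpos⟩
  rw [show (∑ k, (starRingEnd ℂ) (Hpow n k ⟨0, hNpos⟩) *
      ((r k : ℂ) * Complex.exp (Complex.I * (φ' k : ℂ)))) =
      (((1 / Real.sqrt 2 : ℝ) : ℂ)) ^ n * ∑ k, z k by
    rw [Finset.mul_sum]; refine Finset.sum_congr rfl fun k _ => ?_
    rw [hH k]; rw [← Complex.ofReal_pow]; rw [Complex.conj_ofReal],
    show (∑ k, (starRingEnd ℂ) (Hpow n k ⟨0, hNpos⟩) * (r k : ℂ)) =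
      (((1 / Real.sqrt 2 : ℝ) : ℂ)) ^ n * ∑ k, (r k : ℂ) by
    rw [Finset.mul_sum]; refine Finset.sum_congr rfl fun k _ => ?_
    rw [hH k]; rw [← Complex.ofReal_pow]; rw [Complex.conj_ofReal]] at key
  rw [norm_mul, norm_mul] at key
  have hane : ‖(((1 / Real.sqrt 2 : ℝ) : ℂ) ^ n)‖ ≠ 0 := by
    rw [← Complex.ofReal_pow, Complex.norm_real, Real.norm_eq_abs, abs_of_pos ha]; exact ne_of_gt ha
  have key2 : ‖(∑ k, z k)‖ = ‖(∑ k, (r k : ℂ))‖ :=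
    mul_left_cancel₀ hane key
  have hsum_r : (∑ k, (r k : ℂ)) = ((∑ k, r k : ℝ) : ℂ) := by push_cast; rfl
  set S : ℝ := ∑ k, r k with hS
  have hSnonneg : 0 ≤ S := Finset.sum_nonneg fun k _ => hr k
  have hSpos : 0 < S := by
    rcases eq_or_lt_of_le hSnonneg with h | h
    · exfalso
      have : ∀ k ∈ Finset.univ, r k = 0 := by
        intro k _
        have := (Finset.sum_eq_zero_iff_of_nonneg (fun k _ => hr k)).mp h.symm
        exact this k (Finset.mem_univ k)
      have : (∑ i, r i ^ 2) = 0 := Finset.sum_eq_zero fun i _ => by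
        rw [this i (Finset.mem_univ i)]; ring
      rw [hnorm] at this; norm_num at this
    · exact h
  have habsT : ‖(∑ k, z k)‖ = S := by
    rw [key2, hsum_r, Complex.norm_real, Real.norm_eq_abs, abs_of_pos hSpos]
  set T : ℂ := ∑ k, z k with hT
  set c : ℂ := T / (S : ℂ) with hc
  have hSC : (S : ℂ) ≠ 0 := by exact_mod_cast ne_of_gt hSpos
  have habsc : ‖c‖ = 1 := by
    rw [hc, norm_div, habsT, Complex.norm_real, Real.norm_eq_abs, abs_of_pos hSpos, div_self (ne_of_gt hSpos)]
  -- conj c * T = S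
  have hconjT : (starRingEnd ℂ) c * T = (S : ℂ) := by
    rw [hc, map_div₀, Complex.conj_ofReal, div_mul_eq_mul_div, mul_comm,
      Complex.mul_conj, Complex.normSq_eq_norm_sq, habsT]
    push_cast
    field_simp
  -- termwise: Re(conj c * z k) ≤ |z k| = r k
  have habsz : ∀ k, ‖z k‖ = r k := by
    intro k
    rw [hz]
    simp only [norm_mul, Complex.norm_real, Real.norm_eq_abs, Complex.norm_exp]
    have : (Complex.I * (φ' k : ℂ)).re = 0 := by simp
    rw [this, Real.exp_zero, mul_one, abs_of_nonneg (hr k)]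
  have hle : ∀ k ∈ Finset.univ, ((starRingEnd ℂ) c * z k).re ≤ r k := by
    intro k _
    calc ((starRingEnd ℂ) c * z k).re ≤ ‖(starRingEnd ℂ) c * z k‖ :=
          Complex.re_le_norm _
      _ = r k := by rw [norm_mul, Complex.norm_conj, habsc, one_mul, habsz]
  have hsum_eq : (∑ k, ((starRingEnd ℂ) c * z k).re) = ∑ k, r k := by
    have : (∑ k, ((starRingEnd ℂ) c * z k).re) = ((starRingEnd ℂ) c * T).re := by
      rw [hT, Finset.mul_sum, Complex.re_sum]
    rw [this, hconjT, Complex.ofReal_re]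
  have heach : ∀ k ∈ Finset.univ, ((starRingEnd ℂ) c * z k).re = r k :=
    (Finset.sum_eq_sum_iff_of_le hle).mp hsum_eq
  -- from Re w = |w| deduce w = r k
  have hzk : ∀ k, z k = c * (r k : ℂ) := by
    intro k
    have hre : ((starRingEnd ℂ) c * z k).re = r k := heach k (Finset.mem_univ k)
    have habsw : ‖(starRingEnd ℂ) c * z k‖ = r k := by
      rw [norm_mul, Complex.norm_conj, habsc, one_mul, habsz]
    set w := (starRingEnd ℂ) c * z k with hw
    have him : w.im = 0 := by
      have h1 : w.re ^ 2 + w.im ^ 2 = ‖w‖ ^ 2 := by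
        rw [Complex.sq_norm, Complex.normSq_apply]; ring
      rw [habsw, hre] at h1
      nlinarith [sq_nonneg w.im]
    have hweq : w = (r k : ℂ) := by
      apply Complex.ext
      · rw [hre, Complex.ofReal_re]
      · rw [him, Complex.ofReal_im]
    have hcc : c * (starRingEnd ℂ) c = 1 := by
      rw [Complex.mul_conj, Complex.normSq_eq_norm_sq, habsc]; norm_num
    calc z k = (c * (starRingEnd ℂ) c) * z k := by rw [hcc, one_mul]
      _ = c * ((starRingEnd ℂ) c * z k) := by ring
      _ = c * (r k : ℂ) := by rw [← hw, hweq]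
  constructor
  · intro s l hsl
    have hrs : (r s : ℂ) ≠ 0 := by
      simp only [ne_eq, Complex.ofReal_eq_zero]
      exact fun h => hsl (by rw [h, zero_mul])
    have hrl : (r l : ℂ) ≠ 0 := by
      simp only [ne_eq, Complex.ofReal_eq_zero]
      exact fun h => hsl (by rw [h, mul_zero])
    have hs : (r s : ℂ) * Complex.exp (Complex.I * (φ' s : ℂ)) = c * (r s : ℂ) := hzk s
    have hl : (r l : ℂ) * Complex.exp (Complex.I * (φ' l : ℂ)) = c * (r l : ℂ) := hzk l
    have es : Complex.exp (Complex.I * (φ' s : ℂ)) = c :=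
      mul_left_cancel₀ hrs (hs.trans (mul_comm c _))
    have el : Complex.exp (Complex.I * (φ' l : ℂ)) = c :=
      mul_left_cancel₀ hrl (hl.trans (mul_comm c _))
    rw [es, el]
  · exact ⟨c, habsc, fun i => hzk i⟩
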